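/- Let F_L, F_R : ℝⁿ → ℝⁿ be C¹ and H : ℝⁿ → ℝ be C², and write L_F H(X) = ∇H(X)·F(X). Suppose L_{F_R}H(0) = 0 and L_{F_L}H(0) ≠ 0. Then the sliding vector field F_S(X) = (F_R(X) L_{F_L}H(X) − F_L(X) L_{F_R}H(X))/(L_{F_L}H(X) − L_{F_R}H(X)) is well-defined on a neighbourhood of 0, satisfies F_S(0) = F_R(0), is differentiable at 0, and its derivative at 0 is the linear map v ↦ DF_R(0)v + ((∇(L_{F_R}H)(0)·v)/L_{F_L}H(0)) (F_R(0) − F_L(0)). -/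

import Mathlib

/-- Near a fold point of `F_R` on the switching surface, the Filippov sliding vector
field is well-defined, agrees with `F_R` at the fold point, and is differentiable
there with the stated derivative. -/
theorem stmt_1 (n : ℕ) (FL FR : (Fin n → ℝ) → (Fin n → ℝ)) (H : (Fin n → ℝ) → ℝ)
    (hFL : ContDiff ℝ 1 FL) (hFR : ContDiff ℝ 1 FR) (hH : ContDiff ℝ 2 H)
    (LL LR : (Fin n → ℝ) → ℝ)
    (hLL : LL = fun X => fderiv ℝ H X (FL X))
    (hLR : LR = fun X => fderiv ℝ H X (FR X))
    (h0 : LR 0 = 0) (hne : LL 0 ≠ 0)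
    (FS : (Fin n → ℝ) → (Fin n → ℝ))
    (hFS : FS = fun X => (LL X - LR X)⁻¹ • (LL X • FR X - LR X • FL X)) :
    (∀ᶠ X in nhds (0 : Fin n → ℝ), LL X - LR X ≠ 0) ∧
    FS 0 = FR 0 ∧
    HasFDerivAt FS
      (fderiv ℝ FR 0 + (fderiv ℝ LR 0).smulRight ((LL 0)⁻¹ • (FR 0 - FL 0))) 0 := by
  have hdH : ContDiff ℝ 1 (fderiv ℝ H) := hH.fderiv_right (by norm_num)
  have hLLc : ContDiff ℝ 1 LL := by rw [hLL]; exact hdH.clm_apply hFL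
  have hLRc : ContDiff ℝ 1 LR := by rw [hLR]; exact hdH.clm_apply hFR
  have hd0 : LL 0 - LR 0 ≠ 0 := by rw [h0, sub_zero]; exact hne
  have hcont : Continuous (fun X => LL X - LR X) :=
    (hLLc.continuous.sub hLRc.continuous)
  have hev : ∀ᶠ X in nhds (0 : Fin n → ℝ), LL X - LR X ≠ 0 :=
    hcont.continuousAt.eventually_ne hd0
  refine ⟨hev, ?_, ?_⟩
  · rw [hFS]; simp only [h0, sub_zero, zero_smul, smul_smul,
      inv_mul_cancel₀ hne, one_smul]
  · set g : (Fin n → ℝ) → (Fin n → ℝ) :=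
      fun X => FR X + ((LL X - LR X)⁻¹ * LR X) • (FR X - FL X) with hg
    have heq : FS =ᶠ[nhds (0 : Fin n → ℝ)] g := by
      filter_upwards [hev] with X hX
      rw [hFS, hg]
      simp only
      rw [inv_smul_eq_iff₀ hX, smul_add, smul_smul,
        mul_inv_cancel_left₀ hX]
      module
    have hLRd : HasFDerivAt LR (fderiv ℝ LR 0) 0 :=
      ((hLRc.differentiable one_ne_zero) 0).hasFDerivAt
    have hLLd : HasFDerivAt LL (fderiv ℝ LL 0) 0 :=
      ((hLLc.differentiable one_ne_zero) 0).hasFDerivAt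
    have hFRd : HasFDerivAt FR (fderiv ℝ FR 0) 0 :=
      ((hFR.differentiable one_ne_zero) 0).hasFDerivAt
    have hFLd : HasFDerivAt FL (fderiv ℝ FL 0) 0 :=
      ((hFL.differentiable one_ne_zero) 0).hasFDerivAt
    have hψ := (hasDerivAt_inv hd0).comp_hasFDerivAt 0 (hLLd.sub hLRd)
    have hφ := hψ.mul hLRd
    have hgd := hFRd.add (hφ.smul (hFRd.sub hFLd))
    have hgd' : HasFDerivAt g
        (fderiv ℝ FR 0 + (fderiv ℝ LR 0).smulRight ((LL 0)⁻¹ • (FR 0 - FL 0))) 0 := by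
      refine hgd.congr_fderiv (Eq.symm ?_)
      ext v
      simp only [h0, sub_zero, mul_zero, zero_mul, zero_smul, smul_zero, add_zero,
        zero_add, Function.comp_apply, ContinuousLinearMap.add_apply,
        ContinuousLinearMap.smulRight_apply, ContinuousLinearMap.smul_apply,
        Pi.add_apply, Pi.mul_apply, Pi.smul_apply, Pi.sub_apply, smul_eq_mul]
      ring
    exact hgd'.congr_of_eventuallyEq heq
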